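/- (Warm-start clearing correctness) Let D_q (l×m) and D_{q+1} (m×n) satisfy D_q ∘ D_{q+1} = 0. Suppose R_{q+1} = D_{q+1} V_{q+1} and R_q^0 = D_q V_q^0 where V_q^0 is an invertible upper-triangular m×m matrix whose column i has pivot i for all i. Define V_q^1 by setting column i equal to R_{q+1}[j] whenever i = piv(R_{q+1}[j]) for some column j of R_{q+1}, and equal to V_q^0[i] otherwise; define R_q^1 analogously with the zero column in cleared positions and R_q^0[i] otherwise. Assume the pivots of nonzero columns of R_{q+1} are distinct. Then R_q^1 = D_q V_q^1, and V_q^1 is upper-triangular and invertible. -/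
import Mathlib


/-- (Warm-start clearing correctness) Suppose D_q D_{q+1} = 0, R_{q+1} = D_{q+1} V_{q+1},
and R_q^0 = D_q V_q^0 where V_q^0 is upper-triangular with column i having pivot i
(diagonal nonzero). For each nonzero column j of R_{q+1}, `pv j` is its pivot
(largest nonzero row index), and these pivots are distinct. Define V_q^1 to have
column i equal to R_{q+1}[j] whenever i = pv j for a nonzero column j, and V_q^0[i]
otherwise; define R_q^1 to have column i zero in cleared positions and R_q^0[i]
otherwise. Then R_q^1 = D_q V_q^1 and V_q^1 is upper-triangular and invertible. -/
theorem stmt_7 {l m n : ℕ} {k : Type*} [Field k]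
    (Dq : Matrix (Fin l) (Fin m) k) (Dq1 : Matrix (Fin m) (Fin n) k)
    (Vq1 : Matrix (Fin n) (Fin n) k) (Rq1 : Matrix (Fin m) (Fin n) k)
    (Vq0 : Matrix (Fin m) (Fin m) k) (Rq0 : Matrix (Fin l) (Fin m) k)
    (hDD : Dq * Dq1 = 0) (hRq1 : Rq1 = Dq1 * Vq1) (hRq0 : Rq0 = Dq * Vq0)
    (hVq0UT : ∀ i i' : Fin m, i' < i → Vq0 i i' = 0)
    (hVq0diag : ∀ i : Fin m, Vq0 i i ≠ 0)
    (pv : Fin n → Fin m)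
    (hpv : ∀ j : Fin n, (∃ i, Rq1 i j ≠ 0) →
      (Rq1 (pv j) j ≠ 0 ∧ ∀ i : Fin m, pv j < i → Rq1 i j = 0))
    (hdistinct : ∀ j j' : Fin n, (∃ i, Rq1 i j ≠ 0) → (∃ i, Rq1 i j' ≠ 0) →
      j ≠ j' → pv j ≠ pv j')
    (Vq1new : Matrix (Fin m) (Fin m) k) (Rq1new : Matrix (Fin l) (Fin m) k)
    (hVcleared : ∀ (i : Fin m) (j : Fin n), (∃ i', Rq1 i' j ≠ 0) → pv j = i →
      ∀ r : Fin m, Vq1new r i = Rq1 r j)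
    (hVkept : ∀ i : Fin m, (∀ j : Fin n, (∃ i', Rq1 i' j ≠ 0) → pv j ≠ i) →
      ∀ r : Fin m, Vq1new r i = Vq0 r i)
    (hRcleared : ∀ (i : Fin m) (j : Fin n), (∃ i', Rq1 i' j ≠ 0) → pv j = i →
      ∀ r : Fin l, Rq1new r i = 0)
    (hRkept : ∀ i : Fin m, (∀ j : Fin n, (∃ i', Rq1 i' j ≠ 0) → pv j ≠ i) →
      ∀ r : Fin l, Rq1new r i = Rq0 r i) :
    Rq1new = Dq * Vq1new ∧
      (∀ i i' : Fin m, i' < i → Vq1new i i' = 0) ∧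
      IsUnit Vq1new := by
  have key : ∀ i : Fin m,
      ((∃ j, (∃ i', Rq1 i' j ≠ 0) ∧ pv j = i) ∨
        (∀ j : Fin n, (∃ i', Rq1 i' j ≠ 0) → pv j ≠ i)) := by
    intro i
    by_cases h : ∃ j, (∃ i', Rq1 i' j ≠ 0) ∧ pv j = i
    · exact Or.inl h
    · push_neg at h; exact Or.inr h
  have hUT : ∀ i i' : Fin m, i' < i → Vq1new i i' = 0 := by
    intro i i' hlt
    rcases key i' with ⟨j, hj, hpj⟩ | hk
    · rw [hVcleared i' j hj hpj i]
      exact (hpv j hj).2 i (hpj ▸ hlt)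
    · rw [hVkept i' hk i]
      exact hVq0UT i i' hlt
  have hdiag : ∀ i : Fin m, Vq1new i i ≠ 0 := by
    intro i
    rcases key i with ⟨j, hj, hpj⟩ | hk
    · rw [hVcleared i j hj hpj i, ← hpj]
      exact (hpv j hj).1
    · rw [hVkept i hk i]
      exact hVq0diag i
  refine ⟨?_, hUT, ?_⟩
  · ext r i
    rcases key i with ⟨j, hj, hpj⟩ | hk
    · rw [hRcleared i j hj hpj r]
      have h0 : Dq * Rq1 = 0 := by rw [hRq1, ← Matrix.mul_assoc, hDD, Matrix.zero_mul]
      have : (Dq * Vq1new) r i = (Dq * Rq1) r j := by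
        simp only [Matrix.mul_apply]
        exact Finset.sum_congr rfl (fun s _ => by rw [hVcleared i j hj hpj s])
      rw [this, h0, Matrix.zero_apply]
    · rw [hRkept i hk r, hRq0]
      simp only [Matrix.mul_apply]
      exact Finset.sum_congr rfl (fun s _ => by rw [hVkept i hk s])
  · have hBT : Vq1new.BlockTriangular id := fun i j h => hUT i j h
    have hdet : Vq1new.det = ∏ i, Vq1new i i := Matrix.det_of_upperTriangular hBT
    rw [Matrix.isUnit_iff_isUnit_det, isUnit_iff_ne_zero, hdet]
    exact Finset.prod_ne_zero_iff.2 (fun i _ => hdiag i)
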